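/- arXiv:1905.08589 — 2 statements merged into one kernel-verified Lean document; each statement's English description precedes it below -/
import Mathlib

section
/- Let f : ℤ → ℤ be congruence preserving and let n, n' be positive integers. Then λ_f(lcm(n, n')) = lcm(λ_f(n), λ_f(n')). In particular, if n ∣ n' then λ_f(n) ∣ λ_f(n'). -/
/-- `f : ℤ → ℤ` is congruence preserving if `n ∣ (s − t)` implies
`n ∣ (f(s) − f(t))` for every positive integer `n`. -/
def IsCongruencePreserving (f : ℤ → ℤ) : Prop :=
  ∀ (s t : ℤ) (n : ℕ), 0 < n → (n : ℤ) ∣ s - t → (n : ℤ) ∣ f s - f t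

/-- The reduction `f_m : ℤ/mℤ → ℤ/mℤ` of a map `f : ℤ → ℤ`. -/
def intReduction (f : ℤ → ℤ) (m : ℕ) : ZMod m → ZMod m :=
  fun x => ((f (x.val : ℤ) : ℤ) : ZMod m)

/-- The period of a self-map: the least positive `L` with `σ^[K+L] = σ^[K]`
for some `K`. -/
noncomputable def mapPeriod {F : Type*} (σ : F → F) : ℕ :=
  sInf {L : ℕ | 0 < L ∧ ∃ K : ℕ, σ^[K + L] = σ^[K]}

section abstractPeriod

variable {F : Type*} (σ : F → F)

lemma iter_eventual {K K' L : ℕ} (h : σ^[K + L] = σ^[K]) (hK : K ≤ K') :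
    σ^[K' + L] = σ^[K'] := by
  have h1 : K' + L = (K' - K) + (K + L) := by omega
  have h2 : K' = (K' - K) + K := by omega
  rw [h1, Function.iterate_add, h, ← Function.iterate_add, ← h2]

lemma iter_mul_mem {K L : ℕ} (h : σ^[K + L] = σ^[K]) (k : ℕ) :
    σ^[K + k * L] = σ^[K] := by
  induction k with
  | zero => simp
  | succ k ih =>
      have h1 : K + (k + 1) * L = L + (K + k * L) := by ring
      rw [h1, Function.iterate_add, ih, ← Function.iterate_add]
      have h2 : L + K = K + L := by ring
      rw [h2, h]

lemma periodSet_nonempty [Finite F] :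
    {L : ℕ | 0 < L ∧ ∃ K : ℕ, σ^[K + L] = σ^[K]}.Nonempty := by
  obtain ⟨a, b, hab, h⟩ := Finite.exists_ne_map_eq_of_infinite (fun j : ℕ => σ^[j])
  rcases Nat.lt_or_ge a b with hlt | hge
  · exact ⟨b - a, by omega, a, by simpa [Nat.add_sub_cancel' hlt.le] using h.symm⟩
  · have hlt : b < a := by omega
    exact ⟨a - b, by omega, b, by simpa [Nat.add_sub_cancel' hlt.le] using h⟩

lemma mapPeriod_spec [Finite F] :
    0 < mapPeriod σ ∧ (∃ K, σ^[K + mapPeriod σ] = σ^[K]) ∧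
      ∀ L K, 0 < L → σ^[K + L] = σ^[K] → mapPeriod σ ∣ L := by
  have hmem := Nat.sInf_mem (periodSet_nonempty σ)
  obtain ⟨hpos, Kp, hKp⟩ := hmem
  refine ⟨hpos, ⟨Kp, hKp⟩, ?_⟩
  intro L K hL h
  set lam := mapPeriod σ with hlam
  set K0 := max K Kp with hK0
  have h1 : σ^[K0 + lam] = σ^[K0] := iter_eventual σ hKp (le_max_right _ _)
  have h2 : σ^[K0 + L] = σ^[K0] := iter_eventual σ h (le_max_left _ _)
  have hq : σ^[K0 + (L / lam) * lam] = σ^[K0] := iter_mul_mem σ h1 (L / lam)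
  have hr : σ^[K0 + L % lam] = σ^[K0] := by
    have hdecomp : K0 + L = (L % lam) + (K0 + (L / lam) * lam) := by
      have h3 := Nat.div_add_mod L lam
      have h4 : lam * (L / lam) = (L / lam) * lam := Nat.mul_comm _ _
      omega
    calc σ^[K0 + L % lam] = σ^[(L % lam) + K0] := by rw [Nat.add_comm]
      _ = σ^[L % lam] ∘ σ^[K0] := Function.iterate_add σ _ _
      _ = σ^[L % lam] ∘ σ^[K0 + (L / lam) * lam] := by rw [hq]
      _ = σ^[K0 + L] := by rw [← Function.iterate_add, ← hdecomp]
      _ = σ^[K0] := h2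
  by_contra hdvd
  have hrpos : 0 < L % lam := Nat.pos_of_ne_zero (fun h0 => hdvd (Nat.dvd_of_mod_eq_zero h0))
  have hle : lam ≤ L % lam := Nat.sInf_le ⟨hrpos, K0, hr⟩
  have hlt : L % lam < lam := Nat.mod_lt _ hpos
  omega

end abstractPeriod

lemma dvd_swap_sub {a b c : ℤ} (h : a ∣ b - c) : a ∣ c - b := by
  simpa [neg_sub] using dvd_neg.mpr h

lemma intReduction_cast (f : ℤ → ℤ) (hf : IsCongruencePreserving f) {m : ℕ}
    (hm : 0 < m) (x : ℤ) :
    intReduction f m ((x : ZMod m)) = ((f x : ℤ) : ZMod m) := by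
  haveI : NeZero m := ⟨hm.ne'⟩
  unfold intReduction
  rw [ZMod.intCast_eq_intCast_iff]
  have hdvd : (m : ℤ) ∣ (((x : ZMod m).val : ℤ) - x) := by
    rw [← ZMod.intCast_zmod_eq_zero_iff_dvd]
    push_cast
    simp [ZMod.natCast_val, ZMod.intCast_cast]
  exact Int.modEq_iff_dvd.mpr
    (dvd_swap_sub (hf (((x : ZMod m).val : ℤ)) x m hm hdvd))

lemma intReduction_iterate_cast (f : ℤ → ℤ) (hf : IsCongruencePreserving f) {m : ℕ}
    (hm : 0 < m) (j : ℕ) (x : ℤ) :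
    (intReduction f m)^[j] ((x : ZMod m)) = ((f^[j] x : ℤ) : ZMod m) := by
  induction j generalizing x with
  | zero => simp
  | succ j ih =>
      rw [Function.iterate_succ_apply, intReduction_cast f hf hm,
        ih, Function.iterate_succ_apply]

lemma intReduction_iter_eq_iff (f : ℤ → ℤ) (hf : IsCongruencePreserving f) {m : ℕ}
    (hm : 0 < m) (A B : ℕ) :
    (intReduction f m)^[A] = (intReduction f m)^[B] ↔
      ∀ x : ℤ, (m : ℤ) ∣ f^[A] x - f^[B] x := by
  haveI : NeZero m := ⟨hm.ne'⟩
  constructor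
  · intro h x
    have hx := congrFun h ((x : ZMod m))
    rw [intReduction_iterate_cast f hf hm, intReduction_iterate_cast f hf hm] at hx
    rw [ZMod.intCast_eq_intCast_iff] at hx
    exact dvd_swap_sub hx.dvd
  · intro h
    funext y
    have hy : y = (((y.val : ℤ)) : ZMod m) := by
      push_cast
      simp [ZMod.natCast_val]
    rw [hy, intReduction_iterate_cast f hf hm, intReduction_iterate_cast f hf hm,
      ZMod.intCast_eq_intCast_iff]
    exact Int.modEq_iff_dvd.mpr (dvd_swap_sub (h _))

lemma intReduction_transfer (f : ℤ → ℤ) (hf : IsCongruencePreserving f)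
    {d m : ℕ} (hd : 0 < d) (hm : 0 < m) (hdm : d ∣ m) {A B : ℕ}
    (h : (intReduction f m)^[A] = (intReduction f m)^[B]) :
    (intReduction f d)^[A] = (intReduction f d)^[B] := by
  rw [intReduction_iter_eq_iff f hf hm] at h
  rw [intReduction_iter_eq_iff f hf hd]
  intro x
  exact dvd_trans (Int.natCast_dvd_natCast.mpr hdm) (h x)

/-- `λ_f(lcm(n,n')) = lcm(λ_f(n), λ_f(n'))`, and in particular
`n ∣ n'` implies `λ_f(n) ∣ λ_f(n')`. -/
theorem stmt_11 (f : ℤ → ℤ) (hf : IsCongruencePreserving f)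
    (n n' : ℕ) (hn : 0 < n) (hn' : 0 < n') :
    mapPeriod (intReduction f (Nat.lcm n n')) =
      Nat.lcm (mapPeriod (intReduction f n)) (mapPeriod (intReduction f n')) ∧
    (n ∣ n' → mapPeriod (intReduction f n) ∣ mapPeriod (intReduction f n')) := by
  set m := Nat.lcm n n' with hmdef
  have hm : 0 < m := Nat.lcm_pos hn hn'
  haveI : NeZero n := ⟨hn.ne'⟩
  haveI : NeZero n' := ⟨hn'.ne'⟩
  haveI : NeZero m := ⟨hm.ne'⟩
  obtain ⟨hmpos, ⟨Km, hKm⟩, hmdvd⟩ := mapPeriod_spec (intReduction f m)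
  obtain ⟨hnpos, ⟨Kn, hKn⟩, hndvd⟩ := mapPeriod_spec (intReduction f n)
  obtain ⟨hn'pos, ⟨Kn', hKn'⟩, hn'dvd⟩ := mapPeriod_spec (intReduction f n')
  set lm := mapPeriod (intReduction f m)
  set ln := mapPeriod (intReduction f n)
  set ln' := mapPeriod (intReduction f n')
  -- lcm ln ln' ∣ lm
  have h1 : ln ∣ lm :=
    hndvd lm Km hmpos (intReduction_transfer f hf hn hm (Nat.dvd_lcm_left _ _) hKm)
  have h2 : ln' ∣ lm :=
    hn'dvd lm Km hmpos (intReduction_transfer f hf hn' hm (Nat.dvd_lcm_right _ _) hKm)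
  have h3 : Nat.lcm ln ln' ∣ lm := Nat.lcm_dvd h1 h2
  -- lm ∣ lcm ln ln'
  set L := Nat.lcm ln ln' with hLdef
  have hLpos : 0 < L := Nat.lcm_pos hnpos hn'pos
  set K := max Kn Kn' with hKdef
  have hnL : (intReduction f n)^[K + L] = (intReduction f n)^[K] := by
    have := iter_mul_mem (intReduction f n) hKn (L / ln)
    rw [Nat.div_mul_cancel (Nat.dvd_lcm_left _ _)] at this
    exact iter_eventual _ this (le_max_left _ _)
  have hn'L : (intReduction f n')^[K + L] = (intReduction f n')^[K] := by
    have := iter_mul_mem (intReduction f n') hKn' (L / ln')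
    rw [Nat.div_mul_cancel (Nat.dvd_lcm_right _ _)] at this
    exact iter_eventual _ this (le_max_right _ _)
  have hmL : (intReduction f m)^[K + L] = (intReduction f m)^[K] := by
    rw [intReduction_iter_eq_iff f hf hm]
    rw [intReduction_iter_eq_iff f hf hn] at hnL
    rw [intReduction_iter_eq_iff f hf hn'] at hn'L
    intro x
    have := Int.natCast_dvd.mpr (Nat.lcm_dvd (Int.natCast_dvd.mp (hnL x)) (Int.natCast_dvd.mp (hn'L x)))
    simpa [Int.lcm, hmdef] using this
  have h4 : lm ∣ L := hmdvd L K hLpos hmL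
  refine ⟨Nat.dvd_antisymm h4 h3, ?_⟩
  intro hdd
  exact hndvd ln' Kn' hn'pos (intReduction_transfer f hf hn hn' hdd hKn')
end

section
/- Let f : ℤ → ℤ be congruence preserving, p a prime number and a a positive integer. Then λ_f(p^{a+1}) divides lcm{1, 2, …, p} · λ_f(p^a). -/
/- ### Auxiliary lemmas -/

lemma iterShift {F : Type*} (σ : F → F) {K L : ℕ} (h : σ^[K + L] = σ^[K]) (J : ℕ) :
    σ^[K + J + L] = σ^[K + J] := by
  have e1 : K + J + L = J + (K + L) := by ring
  have e2 : K + J = J + K := by ring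
  rw [e1, Function.iterate_add, h, ← Function.iterate_add, e2]

lemma iterMul {F : Type*} (σ : F → F) {K L : ℕ} (h : σ^[K + L] = σ^[K]) (q : ℕ) :
    σ^[K + L * q] = σ^[K] := by
  induction q with
  | zero => simp
  | succ n ih =>
    have e : K + L * (n + 1) = K + L * n + L := by ring
    rw [e, iterShift σ h (L * n), ih]

lemma iterMulPt {F : Type*} (σ : F → F) {i d : ℕ} {x : F}
    (h : σ^[i + d] x = σ^[i] x) (k : ℕ) : σ^[i + d * k] x = σ^[i] x := by
  induction k with
  | zero => simp
  | succ n ih =>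
    have e : i + d * (n + 1) = d + (i + d * n) := by ring
    rw [e, Function.iterate_add_apply, ih]
    have e2 : i + d = d + i := by ring
    rw [e2, Function.iterate_add_apply] at h
    exact h

lemma iterStablePt {F : Type*} (σ : F → F) {i d : ℕ} {x : F}
    (h : σ^[i + d] x = σ^[i] x) {m : ℕ} (him : i ≤ m) {N : ℕ} (hd : d ∣ N) :
    σ^[m + N] x = σ^[m] x := by
  obtain ⟨k, rfl⟩ := hd
  have e1 : m + d * k = (m - i) + (i + d * k) := by omega
  have e2 : (m - i) + i = m := by omega
  rw [e1, Function.iterate_add_apply, iterMulPt σ h k, ← Function.iterate_add_apply, e2]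

lemma mapPeriod_dvd {F : Type*} (σ : F → F) {M : ℕ} (hM : 0 < M)
    (h : ∃ K, σ^[K + M] = σ^[K]) : mapPeriod σ ∣ M := by
  set S := {L : ℕ | 0 < L ∧ ∃ K : ℕ, σ^[K + L] = σ^[K]} with hS
  have hMS : M ∈ S := ⟨hM, h⟩
  have hne : S.Nonempty := ⟨M, hMS⟩
  have hmem : mapPeriod σ ∈ S := Nat.sInf_mem hne
  obtain ⟨hpos, K₁, hK₁⟩ := hmem
  obtain ⟨K₂, hK₂⟩ := h
  set l := mapPeriod σ with hl
  rcases Nat.eq_zero_or_pos (M % l) with hr | hr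
  · exact Nat.dvd_of_mod_eq_zero hr
  · exfalso
    have h1 : σ^[K₁ + K₂ + l] = σ^[K₁ + K₂] := iterShift σ hK₁ K₂
    have h2 : σ^[K₁ + K₂ + M] = σ^[K₁ + K₂] := by
      have := iterShift σ hK₂ K₁
      rwa [add_comm K₂ K₁] at this
    have h3 : σ^[K₁ + K₂ + l * (M / l)] = σ^[K₁ + K₂] := iterMul σ h1 _
    have key : σ^[(K₁ + K₂) + M % l] = σ^[K₁ + K₂] := by
      have e : K₁ + K₂ + M % l = M % l + (K₁ + K₂) := by ring
      rw [e, Function.iterate_add, ← h3, ← Function.iterate_add]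
      have e2 : M % l + (K₁ + K₂ + l * (M / l)) = K₁ + K₂ + M := by
        have := Nat.div_add_mod M l
        omega
      rw [e2, h2, h3]
    have hmemS : M % l ∈ S := ⟨hr, K₁ + K₂, key⟩
    have hle : l ≤ M % l := Nat.sInf_le hmemS
    have hlt : M % l < l := Nat.mod_lt _ hpos
    omega

lemma exists_period {F : Type*} [Finite F] (σ : F → F) :
    ∃ L, 0 < L ∧ ∃ K, σ^[K + L] = σ^[K] := by
  obtain ⟨i, j, hne, hij⟩ := Finite.exists_ne_map_eq_of_infinite (fun n : ℕ => σ^[n])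
  rcases hne.lt_or_gt with hlt | hlt
  · exact ⟨j - i, by omega, i, by rw [Nat.add_sub_cancel' hlt.le]; exact hij.symm⟩
  · exact ⟨i - j, by omega, j, by rw [Nat.add_sub_cancel' hlt.le]; exact hij⟩

lemma reduction_comm (f : ℤ → ℤ) (hf : IsCongruencePreserving f) {m n : ℕ}
    (hm : 0 < m) (hd : m ∣ n) [NeZero n] (x : ZMod n) :
    ZMod.castHom hd (ZMod m) (intReduction f n x) =
      intReduction f m (ZMod.castHom hd (ZMod m) x) := by
  haveI : NeZero m := ⟨hm.ne'⟩
  have hcast : ZMod.castHom hd (ZMod m) x = ((x.val : ℕ) : ZMod m) := by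
    rw [ZMod.castHom_apply, ZMod.natCast_val]
  have hval : (ZMod.castHom hd (ZMod m) x).val = x.val % m := by
    rw [hcast, ZMod.val_natCast]
  show ZMod.castHom hd (ZMod m) ((f (x.val : ℤ) : ℤ) : ZMod n) = _
  rw [map_intCast]
  unfold intReduction
  rw [ZMod.intCast_eq_intCast_iff]
  apply Int.ModEq.symm
  rw [Int.modEq_iff_dvd]
  apply hf _ _ _ hm
  rw [hval]
  obtain ⟨q, hq⟩ : ∃ q, x.val = m * q + x.val % m := ⟨x.val / m, (Nat.div_add_mod x.val m).symm⟩
  exact ⟨q, by push_cast; omega⟩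

lemma reduction_comm_iter (f : ℤ → ℤ) (hf : IsCongruencePreserving f) {m n : ℕ}
    (hm : 0 < m) (hd : m ∣ n) [NeZero n] (k : ℕ) (x : ZMod n) :
    ZMod.castHom hd (ZMod m) ((intReduction f n)^[k] x) =
      (intReduction f m)^[k] (ZMod.castHom hd (ZMod m) x) := by
  induction k with
  | zero => simp
  | succ j ih =>
    rw [Function.iterate_succ_apply', Function.iterate_succ_apply',
      reduction_comm f hf hm hd, ih]

/-- `λ_f(p^{a+1}) ∣ lcm{1,…,p} · λ_f(p^a)`. -/
theorem stmt_12 (f : ℤ → ℤ) (hf : IsCongruencePreserving f)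
    (p : ℕ) (hp : p.Prime) (a : ℕ) (ha : 0 < a) :
    mapPeriod (intReduction f (p ^ (a + 1))) ∣
      (Finset.Icc 1 p).lcm id * mapPeriod (intReduction f (p ^ a)) := by
  have hp0 : 0 < p := hp.pos
  have hn0 : 0 < p ^ a := Nat.pow_pos hp0
  have hn1 : 0 < p ^ (a + 1) := Nat.pow_pos hp0
  haveI : NeZero (p ^ a) := ⟨hn0.ne'⟩
  haveI : NeZero (p ^ (a + 1)) := ⟨hn1.ne'⟩
  set g := intReduction f (p ^ (a + 1)) with hg
  set h := intReduction f (p ^ a) with hh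
  set N := (Finset.Icc 1 p).lcm id with hN
  set L := mapPeriod h with hL
  have hdvd : p ^ a ∣ p ^ (a + 1) := pow_dvd_pow p (Nat.le_succ a)
  set π := ZMod.castHom hdvd (ZMod (p ^ a)) with hπ
  -- L is a genuine period of h
  have hLmem : L ∈ {L : ℕ | 0 < L ∧ ∃ K : ℕ, h^[K + L] = h^[K]} := by
    apply Nat.sInf_mem
    obtain ⟨L', hL'⟩ := exists_period h
    exact ⟨L', hL'⟩
  obtain ⟨hLpos, K₀, hK₀⟩ := hLmem
  -- N is positive
  have hNpos : 0 < N := by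
    rcases Nat.eq_zero_or_pos N with h0 | h0
    · exfalso
      rw [hN, Finset.lcm_eq_zero_iff] at h0
      obtain ⟨x, hx, hx0⟩ := h0
      simp only [id] at hx0
      have := Finset.mem_Icc.mp (Finset.mem_coe.mp hx)
      omega
    · exact h0
  -- key: pointwise eventual periodicity with period L * N
  have key : ∀ x : ZMod (p ^ (a + 1)), g^[(K₀ + L * p) + L * N] x = g^[K₀ + L * p] x := by
    intro x
    set σ := g^[L] with hσ
    set y₀ := g^[K₀] x with hy₀
    have hiter : ∀ i : ℕ, σ^[i] y₀ = g^[K₀ + L * i] x := by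
      intro i
      rw [hσ, hy₀, ← Function.iterate_mul, ← Function.iterate_add_apply]
      congr 1
      ring
    have fib : ∀ i : ℕ, π (σ^[i] y₀) = h^[K₀] (π x) := by
      intro i
      rw [hiter i, reduction_comm_iter f hf hn0 hdvd]
      have := congrFun (iterMul h hK₀ i) (π x)
      exact this
    -- values mod p^a are all equal along the σ-orbit of y₀
    have hmod : ∀ i : ℕ, (σ^[i] y₀).val % p ^ a = (h^[K₀] (π x)).val := by
      intro i
      have h1 : π (σ^[i] y₀) = ((((σ^[i] y₀).val : ℕ)) : ZMod (p ^ a)) := by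
        rw [hπ, ZMod.castHom_apply, ZMod.natCast_val]
      have := congrArg ZMod.val ((h1.symm).trans (fib i))
      rwa [ZMod.val_natCast] at this
    -- pigeonhole on fibers of size ≤ p
    have hdivlt : ∀ z : ZMod (p ^ (a + 1)), z.val / p ^ a < p := by
      intro z
      have hzlt : z.val < p ^ (a + 1) := ZMod.val_lt z
      rw [Nat.div_lt_iff_lt_mul hn0]
      calc z.val < p ^ (a + 1) := hzlt
        _ = p * p ^ a := by ring
    obtain ⟨i, j, hij, huij⟩ :=
      Fintype.exists_ne_map_eq_of_card_lt
        (fun i : Fin (p + 1) => (⟨(σ^[(i : ℕ)] y₀).val / p ^ a, hdivlt _⟩ : Fin p))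
        (by simp)
    have hvals : (σ^[(i : ℕ)] y₀).val = (σ^[(j : ℕ)] y₀).val := by
      have hdiv : (σ^[(i : ℕ)] y₀).val / p ^ a = (σ^[(j : ℕ)] y₀).val / p ^ a :=
        congrArg Fin.val huij
      have hm : (σ^[(i : ℕ)] y₀).val % p ^ a = (σ^[(j : ℕ)] y₀).val % p ^ a := by
        rw [hmod, hmod]
      have d1 : (σ^[(i : ℕ)] y₀).val =
          p ^ a * ((σ^[(i : ℕ)] y₀).val / p ^ a) + (σ^[(i : ℕ)] y₀).val % p ^ a :=
        (Nat.div_add_mod _ _).symm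
      rw [hdiv, hm] at d1
      rw [d1, Nat.div_add_mod]
    have heq : σ^[(i : ℕ)] y₀ = σ^[(j : ℕ)] y₀ :=
      ZMod.val_injective _ hvals
    -- get an i' < j' with equal iterates
    obtain ⟨i', j', hlt, hjle, heq'⟩ :
        ∃ i' j' : ℕ, i' < j' ∧ j' ≤ p ∧ σ^[i'] y₀ = σ^[j'] y₀ := by
      have hine : (i : ℕ) ≠ (j : ℕ) := fun hc => hij (Fin.ext hc)
      rcases hine.lt_or_gt with hlt | hlt
      · exact ⟨i, j, hlt, Nat.lt_succ_iff.mp j.isLt, heq⟩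
      · exact ⟨j, i, hlt, Nat.lt_succ_iff.mp i.isLt, heq.symm⟩
    set d := j' - i' with hd
    have hdN : d ∣ N := by
      have : d ∈ Finset.Icc 1 p := Finset.mem_Icc.mpr ⟨by omega, by omega⟩
      exact Finset.dvd_lcm this
    have hcyc : σ^[i' + d] y₀ = σ^[i'] y₀ := by
      have : i' + d = j' := by omega
      rw [this]; exact heq'.symm
    have hstab : σ^[p + N] y₀ = σ^[p] y₀ :=
      iterStablePt σ hcyc (by omega) hdN
    -- translate back to g
    have e1 : (K₀ + L * p) + L * N = L * (p + N) + K₀ := by ring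
    have e2 : K₀ + L * p = L * p + K₀ := by ring
    rw [e1, e2, Function.iterate_add_apply, Function.iterate_add_apply,
      Function.iterate_mul, Function.iterate_mul]
    exact hstab
  have hfin : g^[(K₀ + L * p) + L * N] = g^[K₀ + L * p] := funext key
  have : mapPeriod g ∣ L * N :=
    mapPeriod_dvd g (Nat.mul_pos hLpos hNpos) ⟨K₀ + L * p, hfin⟩
  rwa [mul_comm L N] at this
end
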